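/- Let G be a locally compact group, H a closed normal subgroup of G, and c ≥ 1. If both H (with the subspace topology) and the quotient group G/H have Property (T)_c, then G has Property (T)_c. -/

import Mathlib

open scoped ENNReal
open MeasureTheory

structure HilbRep (G : Type*) [Group G] [TopologicalSpace G] where
  (space : Type*)
  [normedAddCommGroup : NormedAddCommGroup space]
  [innerProductSpace : InnerProductSpace ℂ space]
  [completeSpace : CompleteSpace space]
  toFun : G →* (space →L[ℂ] space)ˣ

attribute [instance] HilbRep.normedAddCommGroup HilbRep.innerProductSpace HilbRep.completeSpace

namespace HilbRep

variable {G : Type*} [Group G] [TopologicalSpace G]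

/-- The bounded invertible operator associated to a group element. -/
def op (π : HilbRep G) (s : G) : π.space →L[ℂ] π.space :=
  (π.toFun s : π.space →L[ℂ] π.space)

/-- The representation is uniformly bounded by `c`. -/
def IsUB (π : HilbRep G) (c : ℝ) : Prop := ∀ s : G, ‖π.op s‖ ≤ c

/-- The representation is continuous for the strong operator topology. -/
def IsSOTContinuous (π : HilbRep G) : Prop :=
  ∀ ξ : π.space, Continuous fun s : G => π.op s ξ

/-- `π ∈ R_c(G)`: strongly continuous and uniformly bounded by `c`. -/
def IsRc (π : HilbRep G) (c : ℝ) : Prop := π.IsUB c ∧ π.IsSOTContinuous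

/-- `π` almost has invariant vectors. -/
def AlmostInvariantVectors (π : HilbRep G) : Prop :=
  ∀ Q : Set G, IsCompact Q → ∀ ε : ℝ, 0 < ε →
    ∃ ξ : π.space, ∀ s ∈ Q, ‖π.op s ξ - ξ‖ < ε * ‖ξ‖

/-- `π` has a nonzero invariant vector. -/
def HasInvariantVector (π : HilbRep G) : Prop :=
  ∃ ξ : π.space, ξ ≠ 0 ∧ ∀ s : G, π.op s ξ = ξ

end HilbRep

universe u v

/-- Property (T)_c. -/
def HasPropertyT (G : Type u) [Group G] [TopologicalSpace G] (c : ℝ) : Prop :=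
  ∀ π : HilbRep.{u, v} G, π.IsRc c → π.AlmostInvariantVectors → π.HasInvariantVector

theorem exists_compact_lift {G : Type*} [Group G] [TopologicalSpace G]
    [IsTopologicalGroup G] [LocallyCompactSpace G] (H : Subgroup G) {Q : Set (G ⧸ H)}
    (hQ : IsCompact Q) : ∃ K : Set G, IsCompact K ∧ Q ⊆ QuotientGroup.mk '' K := by
  have key : ∀ s : Q, ∃ K : Set G, IsCompact K ∧
      (s : G ⧸ H) ∈ QuotientGroup.mk '' (interior K) := by
    rintro ⟨s, hs⟩
    obtain ⟨g, rfl⟩ := QuotientGroup.mk_surjective s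
    obtain ⟨K, hKc, hKn⟩ := exists_compact_mem_nhds g
    exact ⟨K, hKc, ⟨g, mem_interior_iff_mem_nhds.2 hKn, rfl⟩⟩
  choose K hKc hKm using key
  obtain ⟨t, ht⟩ := hQ.elim_finite_subcover
    (fun s : Q => QuotientGroup.mk '' (interior (K s)))
    (fun s => (QuotientGroup.isOpenQuotientMap_mk).isOpenMap _ isOpen_interior)
    (fun x hx => Set.mem_iUnion.2 ⟨⟨x, hx⟩, hKm ⟨x, hx⟩⟩)
  refine ⟨⋃ s ∈ t, K s, t.finite_toSet.isCompact_biUnion (fun s _ => hKc s), ?_⟩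
  intro x hx
  obtain ⟨s, hst, hxs⟩ := Set.mem_iUnion₂.1 (ht hx)
  obtain ⟨g, hg, rfl⟩ := hxs
  exact ⟨g, Set.mem_biUnion hst (interior_subset hg), rfl⟩

lemma numeric_aux (a b p X ε ε' δ c : ℝ) (ha : 0 < a) (hbnn : 0 ≤ b) (hδ : 0 < δ)
    (hε : 0 < ε) (hc : 1 ≤ c) (hX : X < ε' * a) (hb : δ * b < ε' * a)
    (h1 : ε' ≤ δ / 2) (h2 : ε' ≤ ε * δ / (2 * (δ + c + 1))) (hp : a - b ≤ p) :
    X + (c + 1) * b < ε * p := by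
  have hden : (0:ℝ) < 2 * (δ + c + 1) := by linarith
  have h2' : ε' * (2 * (δ + c + 1)) ≤ ε * δ := (le_div_iff₀ hden).1 h2
  have hba : 2 * b < a := by nlinarith
  have hc1 : (0:ℝ) < c + 1 := by linarith
  have t1 := mul_lt_mul_of_pos_left hX hδ
  have t2 := mul_lt_mul_of_pos_left hb hc1
  have t3 := mul_le_mul_of_nonneg_right h2' ha.le
  have t4 := mul_le_mul_of_nonneg_left hp (mul_pos hε hδ).le
  have t5 := mul_lt_mul_of_pos_left hba (mul_pos hε hδ)
  have key : δ * (X + (c + 1) * b) < δ * (ε * p) := by nlinarith [t1, t2, t3, t4, t5]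
  exact lt_of_mul_lt_mul_left key hδ.le


theorem propertyT_of_normal_subgroup_and_quotient {G : Type u} [Group G] [TopologicalSpace G]
    [IsTopologicalGroup G] [LocallyCompactSpace G] (c : ℝ) (hc : 1 ≤ c)
    (H : Subgroup G) [H.Normal] (hH : IsClosed (H : Set G))
    (hTH : HasPropertyT.{u, v} ↥H c) (hTQ : HasPropertyT.{u, v} (G ⧸ H) c) :
    HasPropertyT.{u, v} G c := by
  intro π hπ hAlm
  obtain ⟨hUB, hSOT⟩ := hπ
  classical
  have hc0 : (0:ℝ) ≤ c := le_trans zero_le_one hc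
  -- multiplicativity of op
  have hmul : ∀ (a b : G) (ξ : π.space), π.op (a * b) ξ = π.op a (π.op b ξ) := by
    intro a b ξ
    show ((π.toFun (a*b) : π.space →L[ℂ] π.space)) ξ = _
    rw [map_mul]
    rfl
  have hone : ∀ ξ : π.space, π.op 1 ξ = ξ := by
    intro ξ
    show ((π.toFun 1 : π.space →L[ℂ] π.space)) ξ = ξ
    rw [map_one]
    rfl
  -- the subspace of H-invariant vectors
  let K : Submodule ℂ π.space :=
    { carrier := {ξ | ∀ h : ↥H, π.op ↑h ξ = ξ}
      add_mem' := fun ha hb h => by rw [map_add, ha h, hb h]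
      zero_mem' := fun h => map_zero _
      smul_mem' := fun r x hx h => by rw [_root_.map_smul, hx h] }
  have hKmem : ∀ {ξ : π.space}, ξ ∈ K ↔ ∀ h : ↥H, π.op ↑h ξ = ξ := Iff.rfl
  have hKclosed : IsClosed (K : Set π.space) := by
    have : (K : Set π.space) = ⋂ h : ↥H, {ξ | π.op ↑h ξ = ξ} := by
      ext ξ; simp only [Set.mem_iInter, SetLike.mem_coe, hKmem, Set.mem_setOf_eq]
    rw [this]
    exact isClosed_iInter fun h => isClosed_eq (π.op ↑h).continuous continuous_id
  haveI : CompleteSpace K := hKclosed.completeSpace_coe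
  haveI : CompleteSpace ↥Kᗮ := K.isClosed_orthogonal.completeSpace_coe
  -- G maps K into K
  have hGK : ∀ (g : G) {ξ : π.space}, ξ ∈ K → π.op g ξ ∈ K := by
    intro g ξ hξ h
    have hmem : (g⁻¹ * ↑h * g) ∈ H := ‹H.Normal›.conj_mem' ↑h h.2 g
    have : π.op ↑h (π.op g ξ) = π.op g (π.op (g⁻¹ * ↑h * g) ξ) := by
      rw [← hmul, ← hmul]
      congr 1
      group
    rw [this, hξ ⟨g⁻¹ * ↑h * g, hmem⟩]
  have hfix : ∀ (h : ↥H) {ξ : π.space}, ξ ∈ K → π.op ↑h ξ = ξ := fun h {ξ} hξ => hξ h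
  have hP0 : ∀ {ξ : π.space}, ξ ∈ K → Submodule.orthogonalProjectionOnto Kᗮ ξ = 0 := fun hξ =>
    Submodule.orthogonalProjectionOnto_orthogonal_apply_eq_zero hξ
  have hPself : ∀ η : ↥Kᗮ, Submodule.orthogonalProjectionOnto Kᗮ ↑η = η := fun η =>
    Submodule.orthogonalProjectionOnto_mem_subspace_eq_self η
  have hPnorm : ∀ x : π.space, ‖(Submodule.orthogonalProjectionOnto Kᗮ x : π.space)‖ ≤ ‖x‖ := by
    intro x
    calc ‖(Submodule.orthogonalProjectionOnto Kᗮ x : π.space)‖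
        ≤ ‖(Submodule.orthogonalProjectionOnto Kᗮ : π.space →L[ℂ] ↥Kᗮ)‖ * ‖x‖ :=
          (Submodule.orthogonalProjectionOnto Kᗮ).le_opNorm x
      _ ≤ 1 * ‖x‖ := by
          gcongr
          exact Submodule.orthogonalProjectionOnto_norm_le _
      _ = ‖x‖ := one_mul _
  -- the quotient representation of H on Kᗮ
  let B : ↥H →* (↥Kᗮ →L[ℂ] ↥Kᗮ) :=
    { toFun := fun h => Submodule.orthogonalProjectionOnto Kᗮ ∘L ((π.op ↑h) ∘L Kᗮ.subtypeL)
      map_one' := by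
        ext η
        simp only [ContinuousLinearMap.comp_apply, Submodule.subtypeL_apply,
          ContinuousLinearMap.one_apply, OneMemClass.coe_one]
        rw [hone]
        exact congrArg _ (hPself η)
      map_mul' := by
        intro h₁ h₂
        ext η
        simp only [ContinuousLinearMap.comp_apply, Submodule.subtypeL_apply,
          ContinuousLinearMap.mul_apply]
        have hd : (↑(Submodule.orthogonalProjectionOnto K (π.op ↑h₂ ↑η)) : π.space)
            + ↑(Submodule.orthogonalProjectionOnto Kᗮ (π.op ↑h₂ ↑η)) = π.op ↑h₂ ↑η :=
          Submodule.starProjection_add_starProjection_orthogonal (K := K)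
          (π.op ↑h₂ ↑η)
        have hsplit : π.op (↑(h₁*h₂) : G) ↑η
            = ↑(Submodule.orthogonalProjectionOnto K (π.op ↑h₂ ↑η))
              + π.op ↑h₁ ↑(Submodule.orthogonalProjectionOnto Kᗮ (π.op ↑h₂ ↑η)) := by
          rw [Subgroup.coe_mul, hmul]
          conv_lhs => rw [← hd]
          rw [map_add, hfix h₁ (Submodule.orthogonalProjectionOnto K (π.op ↑h₂ ↑η)).2]
        rw [hsplit, map_add, hP0 (Submodule.orthogonalProjectionOnto K (π.op ↑h₂ ↑η)).2, zero_add] }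
  have hBapp : ∀ (h : ↥H) (η : ↥Kᗮ),
      B h η = Submodule.orthogonalProjectionOnto Kᗮ (π.op ↑h ↑η) := fun h η => rfl
  let ρH : HilbRep ↥H :=
    { space := ↥Kᗮ
      normedAddCommGroup := inferInstance
      innerProductSpace := inferInstance
      completeSpace := inferInstance
      toFun := B.toHomUnits }
  have hρop : ∀ (h : ↥H), ρH.op h = B h := fun h => rfl
  have hρRc : ρH.IsRc c := by
    constructor
    · intro h
      rw [hρop]
      refine ContinuousLinearMap.opNorm_le_bound _ hc0 fun η => ?_
      rw [hBapp]
      calc ‖(Submodule.orthogonalProjectionOnto Kᗮ (π.op ↑h ↑η) : π.space)‖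
          ≤ ‖π.op ↑h ↑η‖ := hPnorm _
        _ ≤ ‖π.op (↑h : G)‖ * ‖(η : π.space)‖ := (π.op ↑h).le_opNorm _
        _ ≤ c * ‖(η : π.space)‖ := by gcongr; exact hUB _
    · intro η
      have : (fun h : ↥H => ρH.op h η)
          = fun h : ↥H => Submodule.orthogonalProjectionOnto Kᗮ (π.op ↑h ↑η) := rfl
      rw [this]
      exact ((Submodule.orthogonalProjectionOnto Kᗮ).continuous).comp
        ((hSOT ↑η).comp continuous_subtype_val)
  -- ρH has no nonzero invariant vector
  have hρnoinv : ¬ ρH.HasInvariantVector := by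
    rintro ⟨η, hη0, hηinv⟩
    -- the coboundary lies in K
    have hkmem : ∀ h : ↥H, π.op ↑h ↑η - ↑η ∈ K := by
      intro h
      have h1 : π.op ↑h (↑η : π.space)
          = ↑(Submodule.orthogonalProjectionOnto K (π.op ↑h ↑η)) + ↑η := by
        conv_lhs => rw [← (Submodule.starProjection_add_starProjection_orthogonal (K := K)
          (π.op ↑h ↑η) : (↑(Submodule.orthogonalProjectionOnto K (π.op ↑h ↑η)) : π.space)
            + ↑(Submodule.orthogonalProjectionOnto Kᗮ (π.op ↑h ↑η)) = _)]
        congr 1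
        have := hηinv h
        rw [hρop, hBapp] at this
        rw [← Submodule.coe_orthogonalProjectionOnto_apply, this]
      rw [h1, add_sub_cancel_right]
      exact (Submodule.orthogonalProjectionOnto K (π.op ↑h ↑η)).2
    have hadd : ∀ a b : ↥H,
        (π.op (↑(a*b) : G) ↑η - ↑η) = (π.op ↑a ↑η - ↑η) + (π.op ↑b ↑η - ↑η) := by
      intro a b
      have h2 : π.op ↑a (π.op ↑b (↑η : π.space))
          = π.op ↑a ↑η + (π.op ↑b ↑η - ↑η) := by
        conv_lhs => rw [show π.op ↑b (↑η : π.space) = ↑η + (π.op ↑b ↑η - ↑η) by abel]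
        rw [map_add, hfix a (hkmem b)]
      rw [Subgroup.coe_mul, hmul, h2]
      abel
    have hpow : ∀ (h : ↥H) (n : ℕ),
        π.op (↑(h^n) : G) ↑η - ↑η = n • (π.op ↑h ↑η - ↑η) := by
      intro h n
      induction n with
      | zero => simp [hone]
      | succ n ih =>
          rw [pow_succ, hadd, ih, succ_nsmul]
    have hk0 : ∀ h : ↥H, π.op ↑h (↑η : π.space) = ↑η := by
      intro h
      by_contra hne
      have hne' : π.op ↑h (↑η : π.space) - ↑η ≠ 0 := sub_ne_zero.2 hne
      have hpos : 0 < ‖π.op ↑h (↑η : π.space) - ↑η‖ := norm_pos_iff.2 hne'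
      obtain ⟨n, hn⟩ := exists_nat_gt
        ((c * ‖(η : π.space)‖ + ‖(η : π.space)‖) / ‖π.op ↑h (↑η : π.space) - ↑η‖)
      have hnorm : ‖π.op (↑(h^n) : G) ↑η - (↑η : π.space)‖
          ≤ c * ‖(η : π.space)‖ + ‖(η : π.space)‖ := by
        refine (norm_sub_le _ _).trans (add_le_add ?_ le_rfl)
        refine ((π.op _).le_opNorm _).trans ?_
        gcongr
        exact hUB _
      rw [hpow h n] at hnorm
      rw [← Nat.cast_smul_eq_nsmul ℝ, norm_smul, Real.norm_natCast] at hnorm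
      rw [div_lt_iff₀ hpos] at hn
      linarith
    have : (↑η : π.space) ∈ K := fun h => hk0 h
    have hz : (↑η : π.space) = 0 :=
      Submodule.disjoint_def.mp K.orthogonal_disjoint _ this η.2
    exact hη0 (Subtype.ext hz)
  have hρnotalm : ¬ ρH.AlmostInvariantVectors := fun hA => hρnoinv (hTH ρH hρRc hA)
  rw [HilbRep.AlmostInvariantVectors] at hρnotalm
  push_neg at hρnotalm
  obtain ⟨Q₀, hQ₀c, δ, hδ, hQ₀⟩ := hρnotalm
  obtain ⟨h₀, hh₀, -⟩ := hQ₀ 0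
  -- the representation of G ⧸ H on K
  let A : G →* (↥K →L[ℂ] ↥K) :=
    { toFun := fun g => ContinuousLinearMap.codRestrict ((π.op g) ∘L K.subtypeL) K
        (fun ξ => hGK g ξ.2)
      map_one' := by
        ext ξ
        simp only [ContinuousLinearMap.coe_codRestrict_apply,
          ContinuousLinearMap.comp_apply, Submodule.subtypeL_apply,
          ContinuousLinearMap.one_apply]
        exact hone _
      map_mul' := by
        intro a b
        ext ξ
        simp only [ContinuousLinearMap.coe_codRestrict_apply,
          ContinuousLinearMap.comp_apply, Submodule.subtypeL_apply,
          ContinuousLinearMap.mul_apply]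
        exact hmul a b _ }
  have hAtriv : ∀ x ∈ H, A.toHomUnits x = 1 := by
    intro x hx
    apply Units.ext
    apply ContinuousLinearMap.ext
    intro ξ
    apply Subtype.ext
    show (π.op x) (↑ξ : π.space) = ↑ξ
    exact hfix ⟨x, hx⟩ ξ.2
  have hAker : H ≤ (A.toHomUnits).ker := fun x hx => hAtriv x hx
  let σ : HilbRep (G ⧸ H) :=
    { space := ↥K
      normedAddCommGroup := inferInstance
      innerProductSpace := inferInstance
      completeSpace := inferInstance
      toFun := QuotientGroup.lift H A.toHomUnits hAker }
  have hσmk : ∀ (g : G) (ξ : ↥K),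
      (σ.op (QuotientGroup.mk g) ξ : π.space) = π.op g ↑ξ := fun g ξ => rfl
  have hσRc : σ.IsRc c := by
    constructor
    · intro s
      induction s using QuotientGroup.induction_on with
      | _ g =>
        refine ContinuousLinearMap.opNorm_le_bound _ hc0 fun ξ => ?_
        show ‖(σ.op (QuotientGroup.mk g) ξ : π.space)‖ ≤ c * ‖(ξ : π.space)‖
        rw [hσmk]
        calc ‖π.op g ↑ξ‖ ≤ ‖π.op g‖ * ‖(ξ : π.space)‖ := (π.op g).le_opNorm _
          _ ≤ c * ‖(ξ : π.space)‖ := by gcongr; exact hUB _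
    · intro ξ
      rw [(QuotientGroup.isQuotientMap_mk H).continuous_iff]
      apply continuous_induced_rng.2
      exact hSOT ↑ξ
  -- σ almost has invariant vectors
  have hσAlm : σ.AlmostInvariantVectors := by
    intro Q' hQ' ε hε
    obtain ⟨Q₁, hQ₁c, hQ₁⟩ := exists_compact_lift H hQ'
    set QG : Set G := (Subtype.val '' Q₀) ∪ Q₁ with hQGdef
    have hQGc : IsCompact QG := (hQ₀c.image continuous_subtype_val).union hQ₁c
    have hden : (0:ℝ) < 2 * (δ + c + 1) := by linarith
    set ε' : ℝ := min (δ/2) (ε * δ / (2 * (δ + c + 1))) with hε'def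
    have hε'pos : 0 < ε' := lt_min (by linarith) (by positivity)
    obtain ⟨ξ, hξ⟩ := hAlm QG hQGc ε' hε'pos
    have hξpos : 0 < ‖ξ‖ := by
      have h1 := hξ ↑h₀ (Set.mem_union_left _ ⟨h₀, hh₀, rfl⟩)
      nlinarith [norm_nonneg (π.op (↑h₀ : G) ξ - ξ), norm_nonneg ξ, hε'pos]
    set w : π.space := ξ - ↑(Submodule.orthogonalProjectionOnto K ξ) with hwdef
    have hwmem : w ∈ Kᗮ := Submodule.sub_starProjection_mem_orthogonal (K := K) ξ
    set η' : ↥Kᗮ := ⟨w, hwmem⟩ with hη'def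
    have hPcoe : (↑(Submodule.orthogonalProjectionOnto K ξ) : π.space) = ξ - w := by
      rw [hwdef]; abel
    obtain ⟨h, hhQ₀, hge⟩ := hQ₀ η'
    have e2 : Submodule.orthogonalProjectionOnto Kᗮ ξ = η' := by
      conv_lhs => rw [show ξ = ↑(Submodule.orthogonalProjectionOnto K ξ) + w by rw [hwdef]; abel]
      rw [map_add, hP0 (Submodule.orthogonalProjectionOnto K ξ).2, zero_add]
      exact hPself η'
    have hcomp : (ρH.op h η' : π.space) - ↑η'
        = ↑(Submodule.orthogonalProjectionOnto Kᗮ (π.op ↑h ξ - ξ)) := by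
      rw [hρop, hBapp]
      have e1 : π.op ↑h (↑η' : π.space) = π.op ↑h ξ - ↑(Submodule.orthogonalProjectionOnto K ξ) := by
        show π.op ↑h (ξ - ↑(Submodule.orthogonalProjectionOnto K ξ)) = _
        rw [map_sub, hfix h (Submodule.orthogonalProjectionOnto K ξ).2]
      rw [e1, map_sub, map_sub, hP0 (Submodule.orthogonalProjectionOnto K ξ).2, sub_zero, e2,
        Submodule.coe_sub]
    have hδb : δ * ‖w‖ < ε' * ‖ξ‖ := by
      have h2 : ‖(ρH.op h η' : π.space) - ↑η'‖ ≤ ‖π.op ↑h ξ - ξ‖ := by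
        rw [hcomp]; exact hPnorm _
      have h3 : ‖π.op (↑h : G) ξ - ξ‖ < ε' * ‖ξ‖ :=
        hξ ↑h (Set.mem_union_left _ ⟨h, hhQ₀, rfl⟩)
      calc δ * ‖w‖ = δ * ‖η'‖ := rfl
        _ ≤ ‖ρH.op h η' - η'‖ := hge
        _ = ‖(ρH.op h η' : π.space) - ↑η'‖ := by rw [← Submodule.coe_sub]; rfl
        _ ≤ ‖π.op ↑h ξ - ξ‖ := h2
        _ < ε' * ‖ξ‖ := h3
    refine ⟨Submodule.orthogonalProjectionOnto K ξ, ?_⟩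
    intro s hs
    obtain ⟨g, hgQ₁, rfl⟩ := hQ₁ hs
    have hgb : ‖π.op g ξ - ξ‖ < ε' * ‖ξ‖ := hξ g (Set.mem_union_right _ hgQ₁)
    have hwnorm : ‖π.op g w - w‖ ≤ (c+1) * ‖w‖ := by
      refine (norm_sub_le _ _).trans ?_
      have h4 : ‖π.op g w‖ ≤ c * ‖w‖ :=
        ((π.op g).le_opNorm w).trans (by gcongr; exact hUB g)
      linarith
    have hid : (σ.op (QuotientGroup.mk g) (Submodule.orthogonalProjectionOnto K ξ) : π.space)
        - ↑(Submodule.orthogonalProjectionOnto K ξ)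
        = (π.op g ξ - ξ) - (π.op g w - w) := by
      rw [hσmk, hPcoe, map_sub]
      abel
    have hnorm1 : ‖(σ.op (QuotientGroup.mk g) (Submodule.orthogonalProjectionOnto K ξ) : π.space)
        - ↑(Submodule.orthogonalProjectionOnto K ξ)‖ ≤ ‖π.op g ξ - ξ‖ + ‖π.op g w - w‖ := by
      rw [hid]; exact norm_sub_le _ _
    have hPlow : ‖ξ‖ - ‖w‖ ≤ ‖(Submodule.orthogonalProjectionOnto K ξ : π.space)‖ := by
      rw [hPcoe]; exact norm_sub_norm_le ξ w
    have hfinal : ‖π.op g ξ - ξ‖ + (c+1) * ‖w‖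
        < ε * ‖(Submodule.orthogonalProjectionOnto K ξ : π.space)‖ :=
      numeric_aux ‖ξ‖ ‖w‖ ‖(Submodule.orthogonalProjectionOnto K ξ : π.space)‖ ‖π.op g ξ - ξ‖
        ε ε' δ c hξpos (norm_nonneg _) hδ hε hc hgb hδb
        (min_le_left _ _) (min_le_right _ _) hPlow
    have : ‖σ.op (QuotientGroup.mk g) (Submodule.orthogonalProjectionOnto K ξ)
        - Submodule.orthogonalProjectionOnto K ξ‖
        = ‖(σ.op (QuotientGroup.mk g) (Submodule.orthogonalProjectionOnto K ξ) : π.space)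
        - ↑(Submodule.orthogonalProjectionOnto K ξ)‖ := by rw [← Submodule.coe_sub]; rfl
    rw [this]
    calc ‖(σ.op (QuotientGroup.mk g) (Submodule.orthogonalProjectionOnto K ξ) : π.space)
        - ↑(Submodule.orthogonalProjectionOnto K ξ)‖
        ≤ ‖π.op g ξ - ξ‖ + ‖π.op g w - w‖ := hnorm1
      _ ≤ ‖π.op g ξ - ξ‖ + (c+1) * ‖w‖ := by linarith
      _ < ε * ‖(Submodule.orthogonalProjectionOnto K ξ : π.space)‖ := hfinal
      _ = ε * ‖Submodule.orthogonalProjectionOnto K ξ‖ := rfl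
  -- conclude via property (T) of the quotient
  obtain ⟨ξ₀, hξ₀ne, hξ₀inv⟩ := hTQ σ hσRc hσAlm
  refine ⟨↑ξ₀, ?_, ?_⟩
  · simpa using hξ₀ne
  · intro s
    have h5 := hξ₀inv (QuotientGroup.mk s)
    have : (σ.op (QuotientGroup.mk s) ξ₀ : π.space) = ↑ξ₀ := by rw [h5]
    rw [← hσmk s ξ₀, this]
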